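/- arXiv:2502.05619 — 3 statements merged into one kernel-verified Lean document; each statement's English description precedes it below -/
import Mathlib

section
/- Every two-dimensional solvable evolution algebra over any field K is either abelian (zero product), or isomorphic to the algebra with natural basis {e_1, e_2} and product e_1^2 = e_1 + e_2, e_2^2 = -(e_1 + e_2), or isomorphic to the algebra with product e_1^2 = e_2, e_2^2 = 0; and these three algebras are pairwise non-isomorphic. -/
open Submodule

variable {K : Type} [Field K] {E : Type} [AddCommGroup E] [Module K E]

/-- The product of two submodules under a bilinear multiplication. -/
def mulSet (μ : E →ₗ[K] E →ₗ[K] E) (U V : Submodule K E) : Submodule K E :=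
  Submodule.span K {z | ∃ u ∈ U, ∃ v ∈ V, z = μ u v}

/-- Derived series starting from a submodule: `dser μ I 0 = I`,
`dser μ I (k+1) = (dser μ I k)·(dser μ I k)`.  Thus `dser μ ⊤ (k-1) = E^(k)`. -/
def dser (μ : E →ₗ[K] E →ₗ[K] E) (I : Submodule K E) : ℕ → Submodule K E
  | 0 => I
  | k + 1 => mulSet μ (dser μ I k) (dser μ I k)

/-- Lower central-type series: `lowerPow μ k = E^(k+1)` where
`E^1 = E` and `E^(k+1) = Σ_{i=1}^k E^i E^(k+1-i)`. -/
def lowerPow (μ : E →ₗ[K] E →ₗ[K] E) : ℕ → Submodule K E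
  | 0 => ⊤
  | k + 1 => ⨆ i : Fin (k + 1), mulSet μ (lowerPow μ i.1) (lowerPow μ (k - i.1))
  decreasing_by
  · exact i.2
  · omega

/-- A submodule closed under the multiplication. -/
def IsSubalg (μ : E →ₗ[K] E →ₗ[K] E) (U : Submodule K E) : Prop :=
  ∀ x ∈ U, ∀ y ∈ U, μ x y ∈ U

/-- A (two-sided) ideal. -/
def IsIdeal (μ : E →ₗ[K] E →ₗ[K] E) (I : Submodule K E) : Prop :=
  ∀ x ∈ I, ∀ y : E, μ x y ∈ I ∧ μ y x ∈ I

/-- Subalgebra generated by a set. -/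
def gen (μ : E →ₗ[K] E →ₗ[K] E) (s : Set E) : Submodule K E :=
  sInf {W | IsSubalg μ W ∧ s ⊆ W}

/-- Quasi-ideal: the subalgebra generated together with any subalgebra is the vector-space sum. -/
def QuasiIdeal (μ : E →ₗ[K] E →ₗ[K] E) (U : Submodule K E) : Prop :=
  IsSubalg μ U ∧ ∀ V : Submodule K E, IsSubalg μ V → gen μ (↑U ∪ ↑V) = U ⊔ V

/-- The subalgebra lattice is modular. -/
def ModularLat (μ : E →ₗ[K] E →ₗ[K] E) : Prop :=
  ∀ U V W : Submodule K E, IsSubalg μ U → IsSubalg μ V → IsSubalg μ W → U ≤ W →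
    gen μ (↑U ∪ ↑(V ⊓ W)) = gen μ (↑U ∪ ↑V) ⊓ W

/-- The subalgebra lattice is distributive. -/
def DistribLat (μ : E →ₗ[K] E →ₗ[K] E) : Prop :=
  ∀ U V W : Submodule K E, IsSubalg μ U → IsSubalg μ V → IsSubalg μ W →
    gen μ (↑U ∪ ↑(V ⊓ W)) = gen μ (↑U ∪ ↑V) ⊓ gen μ (↑U ∪ ↑W)

/-- Supersolvable: a complete flag of ideals. -/
def Supersolvable (μ : E →ₗ[K] E →ₗ[K] E) : Prop :=
  ∃ I : ℕ → Submodule K E, (∀ i, IsIdeal μ (I i)) ∧ (∀ i, I i ≤ I (i + 1)) ∧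
    (∀ i ≤ Module.finrank K E, Module.finrank K (I i) = i) ∧ I (Module.finrank K E) = ⊤

/-- Maximal subalgebra `A` of the subalgebra `B`. -/
def MaxIn (μ : E →ₗ[K] E →ₗ[K] E) (A B : Submodule K E) : Prop :=
  A ≤ B ∧ A ≠ B ∧ ∀ W : Submodule K E, IsSubalg μ W → A ≤ W → W ≤ B → W = A ∨ W = B

lemma mulSet_mono {μ : E →ₗ[K] E →ₗ[K] E} {U U' V V' : Submodule K E}
    (hU : U ≤ U') (hV : V ≤ V') : mulSet μ U V ≤ mulSet μ U' V' := by
  apply span_mono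
  rintro z ⟨u, hu, v, hv, rfl⟩
  exact ⟨u, hU hu, v, hV hv, rfl⟩

lemma le_dser_top {μ : E →ₗ[K] E →ₗ[K] E} {W : Submodule K E}
    (hW : mulSet μ W W = W) : ∀ m, W ≤ dser μ ⊤ m := by
  intro m
  induction m with
  | zero => exact le_top
  | succ k ih =>
      calc W = mulSet μ W W := hW.symm
        _ ≤ dser μ ⊤ (k + 1) := mulSet_mono ih ih

lemma not_solv_of_fix {μ : E →ₗ[K] E →ₗ[K] E} {W : Submodule K E}
    (hW : mulSet μ W W = W) (hne : W ≠ ⊥) : ¬ ∃ m, dser μ ⊤ m = ⊥ := by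
  rintro ⟨m, hm⟩
  exact hne (le_bot_iff.mp (hm ▸ le_dser_top hW m))

lemma fix_span {μ : E →ₗ[K] E →ₗ[K] E} {z : E} {s : K}
    (hz : μ z z = s • z) (hs : s ≠ 0) :
    mulSet μ (span K {z}) (span K {z}) = span K {z} := by
  apply le_antisymm
  · apply span_le.mpr
    rintro w ⟨x, hx, y, hy, rfl⟩
    obtain ⟨p, rfl⟩ := mem_span_singleton.mp hx
    obtain ⟨q, rfl⟩ := mem_span_singleton.mp hy
    have : μ (p • z) (q • z) = (p * q * s) • z := by
      simp only [map_smul, LinearMap.smul_apply, hz, smul_smul]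
      ring_nf
    rw [this]
    exact smul_mem _ _ (mem_span_singleton_self z)
  · apply span_le.mpr
    intro w hw
    rw [Set.mem_singleton_iff] at hw
    subst hw
    have : μ (s⁻¹ • w) w = w := by
      rw [map_smul, LinearMap.smul_apply, hz, smul_smul, inv_mul_cancel₀ hs, one_smul]
    exact subset_span ⟨s⁻¹ • w, smul_mem _ _ (mem_span_singleton_self w),
      w, mem_span_singleton_self w, this.symm⟩

lemma sum_ne_zero' (f : Module.Basis (Fin 2) K E) : f 0 + f 1 ≠ 0 := by
  intro h
  have := congrArg (fun x => f.repr x 0) h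
  simp [Module.Basis.repr_self] at this

/-- every two-dimensional solvable evolution algebra is abelian, or has a
natural basis with `f₁² = f₁ + f₂, f₂² = -(f₁+f₂)`, or one with `f₁² = f₂, f₂² = 0`;
and these three possibilities are mutually exclusive (the models are pairwise
non-isomorphic). -/
theorem stmt4 (μ : E →ₗ[K] E →ₗ[K] E)
    (hcomm : ∀ x y : E, μ x y = μ y x)
    (b : Module.Basis (Fin 2) K E)
    (hnat : ∀ i j : Fin 2, i ≠ j → μ (b i) (b j) = 0)
    (hsolv : ∃ m : ℕ, dser μ ⊤ m = ⊥) :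
    ((μ = 0) ∨
      (∃ f : Module.Basis (Fin 2) K E, μ (f 0) (f 1) = 0 ∧
        μ (f 0) (f 0) = f 0 + f 1 ∧ μ (f 1) (f 1) = -(f 0 + f 1)) ∨
      (∃ f : Module.Basis (Fin 2) K E, μ (f 0) (f 1) = 0 ∧
        μ (f 0) (f 0) = f 1 ∧ μ (f 1) (f 1) = 0)) ∧
    ¬ ((μ = 0) ∧
      (∃ f : Module.Basis (Fin 2) K E, μ (f 0) (f 1) = 0 ∧
        μ (f 0) (f 0) = f 0 + f 1 ∧ μ (f 1) (f 1) = -(f 0 + f 1))) ∧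
    ¬ ((μ = 0) ∧
      (∃ f : Module.Basis (Fin 2) K E, μ (f 0) (f 1) = 0 ∧
        μ (f 0) (f 0) = f 1 ∧ μ (f 1) (f 1) = 0)) ∧
    ¬ ((∃ f : Module.Basis (Fin 2) K E, μ (f 0) (f 1) = 0 ∧
        μ (f 0) (f 0) = f 0 + f 1 ∧ μ (f 1) (f 1) = -(f 0 + f 1)) ∧
      (∃ f : Module.Basis (Fin 2) K E, μ (f 0) (f 1) = 0 ∧
        μ (f 0) (f 0) = f 1 ∧ μ (f 1) (f 1) = 0)) := by
  have h01 : μ (b 0) (b 1) = 0 := hnat 0 1 (by decide)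
  have h10 : μ (b 1) (b 0) = 0 := hnat 1 0 (by decide)
  obtain ⟨α, β, hu⟩ : ∃ p q : K, μ (b 0) (b 0) = p • b 0 + q • b 1 := by
    have := b.sum_repr (μ (b 0) (b 0))
    rw [Fin.sum_univ_two] at this
    exact ⟨_, _, this.symm⟩
  obtain ⟨γ, δ, hv⟩ : ∃ p q : K, μ (b 1) (b 1) = p • b 0 + q • b 1 := by
    have := b.sum_repr (μ (b 1) (b 1))
    rw [Fin.sum_univ_two] at this
    exact ⟨_, _, this.symm⟩
  constructor
  · -- main classification
    by_cases hu0 : μ (b 0) (b 0) = 0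
    · by_cases hv0 : μ (b 1) (b 1) = 0
      · -- abelian
        left
        apply b.ext; intro i; apply b.ext; intro j
        simp only [LinearMap.zero_apply]
        fin_cases i <;> fin_cases j
        exacts [hu0, hnat 0 1 (by decide), hnat 1 0 (by decide), hv0]
      · -- u = 0, v ≠ 0 : type C with swapped basis
        right; right
        have hvv : μ (μ (b 1) (b 1)) (μ (b 1) (b 1)) = (δ * δ) • μ (b 1) (b 1) := by
          rw [hv]
          simp only [map_add, map_smul, LinearMap.add_apply, LinearMap.smul_apply,
            hu0, h01, h10, hv, smul_zero, add_zero, zero_add]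
          module
        have hδ0 : δ = 0 := by
          by_contra hδ
          exact not_solv_of_fix (fix_span hvv (mul_ne_zero hδ hδ))
            (by simpa [span_singleton_eq_bot] using hv0) hsolv
        have hv' : μ (b 1) (b 1) = γ • b 0 := by rw [hv, hδ0]; module
        have hγ : γ ≠ 0 := by
          intro h; exact hv0 (by rw [hv', h, zero_smul])
        refine ⟨(b.reindex (Equiv.swap 0 1)).unitsSMul ![1, Units.mk0 γ hγ], ?_, ?_, ?_⟩ <;>
          simp only [Module.Basis.unitsSMul_apply, Module.Basis.reindex_apply, Equiv.symm_swap,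
            Equiv.swap_apply_left, Equiv.swap_apply_right, Matrix.cons_val_zero,
            Matrix.cons_val_one, Matrix.head_cons, Units.smul_def, Units.val_one,
            Units.val_mk0, one_smul]
        · simp only [map_smul, LinearMap.smul_apply, h10, smul_zero]
        · exact hv'
        · simp only [map_smul, LinearMap.smul_apply, hu0, smul_zero]
    · -- u ≠ 0
      have hdet : α * δ - β * γ = 0 := by
        by_contra hdet
        refine absurd hsolv (not_solv_of_fix (W := ⊤) ?_ ?_)
        · apply le_antisymm le_top
          have hue : μ (b 0) (b 0) ∈ mulSet μ ⊤ ⊤ :=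
            subset_span ⟨b 0, mem_top, b 0, mem_top, rfl⟩
          have hve : μ (b 1) (b 1) ∈ mulSet μ ⊤ ⊤ :=
            subset_span ⟨b 1, mem_top, b 1, mem_top, rfl⟩
          have hb0 : b 0 ∈ mulSet μ ⊤ ⊤ := by
            have key : b 0 = (α * δ - β * γ)⁻¹ • (δ • μ (b 0) (b 0) - β • μ (b 1) (b 1)) := by
              rw [hu, hv]
              match_scalars <;> field_simp <;> ring
            rw [key]
            exact smul_mem _ _ (sub_mem (smul_mem _ _ hue) (smul_mem _ _ hve))
          have hb1 : b 1 ∈ mulSet μ ⊤ ⊤ := by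
            have key : b 1 = (α * δ - β * γ)⁻¹ • (α • μ (b 1) (b 1) - γ • μ (b 0) (b 0)) := by
              rw [hu, hv]
              match_scalars <;> field_simp <;> ring
            rw [key]
            exact smul_mem _ _ (sub_mem (smul_mem _ _ hve) (smul_mem _ _ hue))
          intro x _
          have hx := b.sum_repr x
          rw [Fin.sum_univ_two] at hx
          rw [← hx]
          exact add_mem (smul_mem _ _ hb0) (smul_mem _ _ hb1)
        · intro h
          have : (b 0 : E) ∈ (⊥ : Submodule K E) := h ▸ mem_top
          exact b.ne_zero 0 ((mem_bot K).mp this)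
      by_cases hα0 : α = 0
      · -- type C directly
        right; right
        have hβ : β ≠ 0 := by
          intro h
          exact hu0 (by rw [hu, hα0, h, zero_smul, zero_smul, add_zero])
        have hγ0 : γ = 0 := by
          rw [hα0] at hdet
          simpa [hβ, sub_eq_zero] using hdet
        have hu' : μ (b 0) (b 0) = β • b 1 := by rw [hu, hα0, zero_smul, zero_add]
        have huu : μ (μ (b 0) (b 0)) (μ (b 0) (b 0)) = (β * δ) • μ (b 0) (b 0) := by
          rw [hu']
          simp only [map_smul, LinearMap.smul_apply, hv, hγ0, hu, hα0, zero_smul, zero_add]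
          module
        have hδ0 : δ = 0 := by
          by_contra hδ
          exact not_solv_of_fix (fix_span huu (mul_ne_zero hβ hδ))
            (by simpa [span_singleton_eq_bot] using hu0) hsolv
        have hv' : μ (b 1) (b 1) = 0 := by
          rw [hv, hγ0, hδ0, zero_smul, zero_smul, add_zero]
        refine ⟨b.unitsSMul ![1, Units.mk0 β hβ], ?_, ?_, ?_⟩ <;>
          simp only [Module.Basis.unitsSMul_apply, Matrix.cons_val_zero, Matrix.cons_val_one,
            Matrix.head_cons, Units.smul_def, Units.val_one, Units.val_mk0, one_smul]
        · simp only [map_smul, LinearMap.smul_apply, h01, smul_zero]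
        · exact hu'
        · simp only [map_smul, LinearMap.smul_apply, hv', smul_zero]
      · -- type B
        right; left
        set c : K := γ * α⁻¹ with hc
        have hca : c * α = γ := by rw [hc, mul_assoc, inv_mul_cancel₀ hα0, mul_one]
        have hcb : c * β = δ := by
          rw [hc]; field_simp; linear_combination -hdet
        have hvc : μ (b 1) (b 1) = c • μ (b 0) (b 0) := by
          rw [hv, hu]
          match_scalars
          · linear_combination hca.symm
          · linear_combination hcb.symm
        have huu : μ (μ (b 0) (b 0)) (μ (b 0) (b 0))
            = (α * α + c * (β * β)) • μ (b 0) (b 0) := by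
          conv_lhs => rw [hu]
          simp only [map_add, map_smul, LinearMap.add_apply, LinearMap.smul_apply,
            h01, h10, hvc, hu, smul_zero, add_zero, zero_add]
          module
        have hs0 : α * α + c * (β * β) = 0 := by
          by_contra hs
          exact not_solv_of_fix (fix_span huu hs)
            (by simpa [span_singleton_eq_bot] using hu0) hsolv
        have hβ : β ≠ 0 := by
          intro h
          rw [h] at hs0
          exact hα0 (by simpa [mul_self_eq_zero] using hs0)
        refine ⟨b.unitsSMul ![Units.mk0 α⁻¹ (inv_ne_zero hα0),
            Units.mk0 (α⁻¹ * α⁻¹ * β)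
              (mul_ne_zero (mul_ne_zero (inv_ne_zero hα0) (inv_ne_zero hα0)) hβ)], ?_, ?_, ?_⟩ <;>
          simp only [Module.Basis.unitsSMul_apply, Matrix.cons_val_zero, Matrix.cons_val_one,
            Matrix.head_cons, Units.smul_def, Units.val_mk0]
        · simp only [map_smul, LinearMap.smul_apply, h01, smul_zero]
        · simp only [map_smul, LinearMap.smul_apply, hu]
          match_scalars <;> field_simp
        · simp only [map_smul, LinearMap.smul_apply, hvc, hu]
          match_scalars
          · field_simp
            linear_combination hs0
          · field_simp
            linear_combination hs0
  refine ⟨?_, ?_, ?_⟩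
  · rintro ⟨h0, f, -, hf00, -⟩
    rw [h0] at hf00
    simp only [LinearMap.zero_apply] at hf00
    exact sum_ne_zero' f hf00.symm
  · rintro ⟨h0, f, -, hf00, -⟩
    rw [h0] at hf00
    simp only [LinearMap.zero_apply] at hf00
    exact f.ne_zero 1 hf00.symm
  · rintro ⟨⟨f, hf01, hf00, hf11⟩, ⟨g, hg01, hg00, hg11⟩⟩
    obtain ⟨p, q, hg0⟩ : ∃ p q : K, g 0 = p • f 0 + q • f 1 := by
      have := f.sum_repr (g 0)
      rw [Fin.sum_univ_two] at this
      exact ⟨_, _, this.symm⟩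
    have hf10 : μ (f 1) (f 0) = 0 := by rw [hcomm, hf01]
    have hgg : μ (g 0) (g 0) = (p * p - q * q) • (f 0 + f 1) := by
      rw [hg0]
      simp only [map_add, map_smul, LinearMap.add_apply, LinearMap.smul_apply,
        hf00, hf11, hf01, hf10, smul_zero, add_zero, zero_add]
      module
    have hg1 : g 1 = (p * p - q * q) • (f 0 + f 1) := by rw [← hg00, hgg]
    have hL : p * p - q * q ≠ 0 := by
      intro h
      exact g.ne_zero 1 (by rw [hg1, h, zero_smul])
    have hz : μ (g 0) (g 1) = ((p * p - q * q) * (p - q)) • (f 0 + f 1) := by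
      rw [hg1, hg0]
      simp only [map_add, map_smul, LinearMap.add_apply, LinearMap.smul_apply,
        hf00, hf11, hf01, hf10, smul_add, smul_zero, add_zero, zero_add]
      module
    rw [hg01] at hz
    have := (smul_eq_zero.mp hz.symm).resolve_right (sum_ne_zero' f)
    have hpq : p - q = 0 := by
      rcases mul_eq_zero.mp this with h | h
      · exact absurd h hL
      · exact h
    apply hL
    rw [sub_eq_zero.mp hpq]; ring
end

section
/- Let E be a solvable non-degenerate evolution algebra over a field K with natural basis {e_1,...,e_n}. Then E has a one-dimensional ideal if and only if E has a basic ideal I (spanned by a subset of the natural basis) which is solvable with dim I^2 = 1 (equivalently, isomorphic to E_k(λ_1,...,λ_k) for some scalars λ with Σλ_j = 0). -/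
open Submodule

variable {K : Type} [Field K] {E : Type} [AddCommGroup E] [Module K E]

lemma mul_mem_mulSet (μ : E →ₗ[K] E →ₗ[K] E) {U V : Submodule K E} {u v : E}
    (hu : u ∈ U) (hv : v ∈ V) : μ u v ∈ mulSet μ U V :=
  subset_span ⟨u, hu, v, hv, rfl⟩

lemma mulSet_le (μ : E →ₗ[K] E →ₗ[K] E) {U V W : Submodule K E}
    (h : ∀ u ∈ U, ∀ v ∈ V, μ u v ∈ W) : mulSet μ U V ≤ W := by
  rw [mulSet, span_le]
  rintro z ⟨u, hu, v, hv, rfl⟩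
  exact h u hu v hv

lemma mulSet_mono_s7 (μ : E →ₗ[K] E →ₗ[K] E) {A B C D : Submodule K E}
    (h1 : A ≤ C) (h2 : B ≤ D) : mulSet μ A B ≤ mulSet μ C D :=
  span_mono (by rintro z ⟨u, hu, v, hv, rfl⟩; exact ⟨u, h1 hu, v, h2 hv, rfl⟩)

lemma dser_mono (μ : E →ₗ[K] E →ₗ[K] E) {I J : Submodule K E} (h : I ≤ J) :
    ∀ m, dser μ I m ≤ dser μ J m
  | 0 => h
  | (k+1) => mulSet_mono_s7 μ (dser_mono μ h k) (dser_mono μ h k)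

/-- a solvable non-degenerate evolution algebra has a one-dimensional
ideal iff it has a basic ideal `I` (spanned by part of the natural basis) which is
solvable with `dim I² = 1`. -/
theorem stmt7 {n : ℕ} (μ : E →ₗ[K] E →ₗ[K] E)
    (hcomm : ∀ x y : E, μ x y = μ y x)
    (b : Module.Basis (Fin n) K E)
    (hnat : ∀ i j : Fin n, i ≠ j → μ (b i) (b j) = 0)
    (hnondeg : ∀ i : Fin n, μ (b i) (b i) ≠ 0)
    (hsolv : ∃ m : ℕ, dser μ ⊤ m = ⊥) :
    (∃ J : Submodule K E, IsIdeal μ J ∧ Module.finrank K J = 1) ↔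
      (∃ S : Set (Fin n),
        IsIdeal μ (Submodule.span K (b '' S)) ∧
        (∃ m : ℕ, dser μ (Submodule.span K (b '' S)) m = ⊥) ∧
        Module.finrank K
          (mulSet μ (Submodule.span K (b '' S)) (Submodule.span K (b '' S))) = 1) := by
  classical
  have hFin : Module.Finite K E := Module.Finite.of_basis b
  -- key computation: multiplying a basis vector by anything
  have key : ∀ (i : Fin n) (y : E), μ (b i) y = b.repr y i • μ (b i) (b i) := by
    intro i y
    calc μ (b i) y = μ (b i) (∑ j, b.repr y j • b j) := by rw [b.sum_repr]
    _ = ∑ j, b.repr y j • μ (b i) (b j) := by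
        rw [map_sum]; exact Finset.sum_congr rfl fun j _ => by rw [map_smul]
    _ = b.repr y i • μ (b i) (b i) := by
        refine Finset.sum_eq_single i (fun j _ hj => ?_) (by simp)
        rw [hnat i j (Ne.symm hj), smul_zero]
  constructor
  · rintro ⟨J, hJ, hJ1⟩
    rw [finrank_eq_one_iff'] at hJ1
    obtain ⟨v, hv0, hvgen⟩ := hJ1
    set v0 : E := (v : E) with hv0def
    have hv0ne : v0 ≠ 0 := fun h => hv0 (Subtype.ext h)
    have hv0J : v0 ∈ J := v.2
    set S : Set (Fin n) := {i | b.repr v0 i ≠ 0} with hS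
    set I : Submodule K E := Submodule.span K (b '' S) with hI
    have hbI : ∀ i ∈ S, b i ∈ I := fun i hi => subset_span ⟨i, hi, rfl⟩
    have hvI : v0 ∈ I := by
      rw [show v0 = ∑ j, b.repr v0 j • b j from (b.sum_repr v0).symm]
      refine sum_mem fun j _ => ?_
      by_cases hj : b.repr v0 j = 0
      · rw [hj, zero_smul]; exact zero_mem _
      · exact smul_mem _ _ (hbI j hj)
    -- squares of basis vectors in S are nonzero multiples of v0
    have hsq : ∀ i ∈ S, ∃ c : K, c ≠ 0 ∧ μ (b i) (b i) = c • v0 := by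
      intro i hi
      have hmem : μ (b i) v0 ∈ J := (hJ v0 hv0J (b i)).2
      obtain ⟨c', hc'⟩ := hvgen ⟨μ (b i) v0, hmem⟩
      have hc'' : μ (b i) v0 = c' • v0 := by
        have := congrArg (Subtype.val) hc'
        simpa using this.symm
      rw [key i v0] at hc''
      refine ⟨(b.repr v0 i)⁻¹ * c', fun h0 => ?_, ?_⟩
      · have : μ (b i) (b i) = 0 := by
          have h2 : μ (b i) (b i) = ((b.repr v0 i)⁻¹ * c') • v0 := by
            rw [mul_smul, ← hc'', ← mul_smul, inv_mul_cancel₀ hi, one_smul]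
          rw [h2, h0, zero_smul]
        exact hnondeg i this
      · rw [mul_smul, ← hc'', ← mul_smul, inv_mul_cancel₀ hi, one_smul]
    -- any product of an I-element with anything lands in K•v0
    have hprod : ∀ x ∈ I, ∀ y : E, μ x y ∈ Submodule.span K {v0} := by
      intro x hx
      induction hx using Submodule.span_induction with
      | mem x hxm =>
        obtain ⟨i, hi, rfl⟩ := hxm
        intro y
        obtain ⟨c, _, hc⟩ := hsq i hi
        rw [key i y, hc, ← mul_smul]
        exact smul_mem _ _ (mem_span_singleton_self v0)
      | zero => intro y; simp only [map_zero, LinearMap.zero_apply]; exact zero_mem _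
      | add x z _ _ hx hz => intro y; rw [map_add, LinearMap.add_apply]; exact add_mem (hx y) (hz y)
      | smul c x _ hx => intro y; rw [map_smul, LinearMap.smul_apply]; exact smul_mem _ _ (hx y)
    have hvle : Submodule.span K {v0} ≤ I := by
      rw [span_le, Set.singleton_subset_iff]; exact hvI
    refine ⟨S, ?_, ?_, ?_⟩
    · intro x hx y
      exact ⟨hvle (hprod x hx y), by rw [hcomm]; exact hvle (hprod x hx y)⟩
    · obtain ⟨m, hm⟩ := hsolv
      exact ⟨m, le_bot_iff.1 (hm ▸ dser_mono μ le_top m)⟩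
    · have heq : mulSet μ I I = Submodule.span K {v0} := by
        refine le_antisymm (mulSet_le μ fun u hu w hw => hprod u hu w) ?_
        rw [span_le, Set.singleton_subset_iff]
        obtain ⟨i, hi⟩ : ∃ i, b.repr v0 i ≠ 0 := by
          by_contra h
          push_neg at h
          apply hv0ne
          have : b.repr v0 = 0 := Finsupp.ext h
          simpa [this] using (b.sum_repr v0).symm
        obtain ⟨c, hc0, hc⟩ := hsq i hi
        have : v0 = c⁻¹ • μ (b i) (b i) := by rw [hc, ← mul_smul, inv_mul_cancel₀ hc0, one_smul]
        rw [this]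
        exact smul_mem _ _ (mul_mem_mulSet μ (hbI i hi) (hbI i hi))
      rw [heq]
      exact finrank_span_singleton hv0ne
  · rintro ⟨S, hIdeal, _, hrank⟩
    set I : Submodule K E := Submodule.span K (b '' S) with hI
    refine ⟨mulSet μ I I, ?_, hrank⟩
    have hsub : mulSet μ I I ≤ I := mulSet_le μ fun u hu w hw => (hIdeal u hu w).1
    have hmul : ∀ z ∈ I, ∀ y : E, μ z y ∈ mulSet μ I I := by
      intro z hz
      induction hz using Submodule.span_induction with
      | mem x hxm =>
        obtain ⟨i, hi, rfl⟩ := hxm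
        intro y
        rw [key i y]
        exact smul_mem _ _ (mul_mem_mulSet μ (subset_span ⟨i, hi, rfl⟩) (subset_span ⟨i, hi, rfl⟩))
      | zero => intro y; simp only [map_zero, LinearMap.zero_apply]; exact zero_mem _
      | add x z _ _ hx hz => intro y; rw [map_add, LinearMap.add_apply]; exact add_mem (hx y) (hz y)
      | smul c x _ hx => intro y; rw [map_smul, LinearMap.smul_apply]; exact smul_mem _ _ (hx y)
    exact fun z hz y => ⟨hmul z (hsub hz) y, by rw [hcomm]; exact hmul z (hsub hz) y⟩
end

section
/- Let E be a nilpotent evolution algebra over a field of characteristic ≠ 2, with strictly upper triangular structure matrix relative to a natural basis. If every subalgebra of E is a quasi-ideal (equivalently E's subalgebra lattice is modular), then every absolute nilpotent element of E lies in the annihilator of E. -/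
open Submodule

variable {K : Type} [Field K] {E : Type} [AddCommGroup E] [Module K E]

lemma gen_isSubalg (μ : E →ₗ[K] E →ₗ[K] E) (s : Set E) : IsSubalg μ (gen μ s) := by
  intro x hx y hy
  rw [gen, Submodule.mem_sInf] at *
  intro W hW
  exact hW.1 x (hx W hW) y (hy W hW)

lemma subset_gen (μ : E →ₗ[K] E →ₗ[K] E) (s : Set E) : s ⊆ gen μ s := fun x hx =>
  Submodule.mem_sInf.2 fun _ hW => hW.2 hx

lemma span_singleton_isSubalg (μ : E →ₗ[K] E →ₗ[K] E) (u : E) (hu : μ u u = 0) :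
    IsSubalg μ (Submodule.span K {u}) := by
  intro x hx y hy
  rw [Submodule.mem_span_singleton] at hx hy
  obtain ⟨s, rfl⟩ := hx
  obtain ⟨t, rfl⟩ := hy
  simp only [map_smul, LinearMap.smul_apply, hu, smul_zero]
  exact zero_mem _

/-- in a nilpotent evolution algebra over a field of characteristic ≠ 2
(strictly upper triangular structure matrix), if every subalgebra is a quasi-ideal
(equivalently the subalgebra lattice is modular), then every absolute nilpotent
element lies in the annihilator. -/
theorem stmt10 {n : ℕ} (h2 : (2 : K) ≠ 0) (μ : E →ₗ[K] E →ₗ[K] E)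
    (hcomm : ∀ x y : E, μ x y = μ y x)
    (b : Module.Basis (Fin n) K E)
    (hnat : ∀ i j : Fin n, i ≠ j → μ (b i) (b j) = 0)
    (hupper : ∀ i k : Fin n, k ≤ i → b.repr (μ (b i) (b i)) k = 0)
    (hqi : ∀ U : Submodule K E, IsSubalg μ U → QuasiIdeal μ U) :
    ∀ u : E, μ u u = 0 → ∀ y : E, μ u y = 0 := by
  intro u hu y
  classical
  set c : Fin n → K := fun i => b.repr u i with hc
  -- multiplication of u with a basis vector
  have hmulb : ∀ i : Fin n, μ u (b i) = c i • μ (b i) (b i) := by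
    intro i
    conv_lhs => rw [← b.sum_repr u]
    rw [map_sum, LinearMap.sum_apply]
    rw [Finset.sum_eq_single i ?_ ?_]
    · rw [map_smul, LinearMap.smul_apply]
    · intro j _ hji
      rw [map_smul, LinearMap.smul_apply, hnat j i hji, smul_zero]
    · intro h; exact absurd (Finset.mem_univ i) h
  have hmulz : ∀ z : E, μ u z = ∑ j, b.repr z j • (c j • μ (b j) (b j)) := by
    intro z
    conv_lhs => rw [← b.sum_repr z]
    rw [map_sum]
    exact Finset.sum_congr rfl fun j _ => by rw [map_smul, hmulb j]
  -- key step: for each i in the support, (b i)² ∈ span {u, b i}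
  have hSpan : ∀ i : Fin n, c i ≠ 0 → ∃ p q : K, μ (b i) (b i) = p • u + q • b i := by
    intro i hci
    set a : K := 2 * c i with ha
    have ha0 : a ≠ 0 := mul_ne_zero h2 hci
    set v : E := u - a • b i with hv
    have hv2 : μ v v = 0 := by
      have expand : μ v v = μ u u - a • μ u (b i) - a • μ (b i) u + (a * a) • μ (b i) (b i) := by
        rw [hv]
        simp only [map_sub, map_smul, LinearMap.sub_apply, LinearMap.smul_apply, smul_sub,
          smul_smul]
        abel
      rw [expand, hu, hcomm (b i) u, hmulb i, smul_smul]
      have haa : a * a = a * c i + a * c i := by rw [ha]; ring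
      rw [haa, add_smul]
      abel
    have hUsub := span_singleton_isSubalg μ u hu
    have hVsub := span_singleton_isSubalg μ v hv2
    have hgen := (hqi _ hUsub).2 _ hVsub
    have hsup : Submodule.span K {u} ⊔ Submodule.span K {v} = Submodule.span K {u, v} := by
      rw [← Submodule.span_union, Set.singleton_union]
    have huG : u ∈ Submodule.span K {u, v} :=
      Submodule.subset_span (by simp)
    have hvG : v ∈ Submodule.span K {u, v} :=
      Submodule.subset_span (by simp)
    have hbiG : b i ∈ Submodule.span K {u, v} := by
      have h1 : a⁻¹ • (u - v) = b i := by
        rw [hv]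
        rw [sub_sub_cancel, smul_smul, inv_mul_cancel₀ ha0, one_smul]
      rw [← h1]
      exact Submodule.smul_mem _ _ (Submodule.sub_mem _ huG hvG)
    -- the generated subalgebra equals span {u, v}, so μ u (b i) ∈ span {u, v}
    have hmem : μ u (b i) ∈ Submodule.span K {u, v} := by
      rw [← hsup, ← hgen]
      have hG := gen_isSubalg μ ((Submodule.span K {u} : Set E) ∪ (Submodule.span K {v} : Set E))
      have hug : u ∈ gen μ ((Submodule.span K {u} : Set E) ∪ (Submodule.span K {v} : Set E)) :=
        subset_gen μ _ (Or.inl (Submodule.mem_span_singleton_self u))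
      have hbig : b i ∈ gen μ ((Submodule.span K {u} : Set E) ∪ (Submodule.span K {v} : Set E)) := by
        rw [hgen, hsup]; exact hbiG
      exact hG u hug (b i) hbig
    -- span {u, v} ≤ span {u, b i}
    have hle : Submodule.span K {u, v} ≤ Submodule.span K {u, b i} := by
      rw [Submodule.span_le]
      rintro z (rfl | rfl)
      · exact Submodule.subset_span (by simp)
      · rw [hv]
        exact Submodule.sub_mem _ (Submodule.subset_span (by simp))
          (Submodule.smul_mem _ _ (Submodule.subset_span (by simp)))
    have hmem2 : μ (b i) (b i) ∈ Submodule.span K {u, b i} := by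
      have h3 : c i • μ (b i) (b i) ∈ Submodule.span K {u, b i} := by
        rw [← hmulb i]; exact hle hmem
      have h4 := Submodule.smul_mem _ (c i)⁻¹ h3
      rwa [smul_smul, inv_mul_cancel₀ hci, one_smul] at h4
    rw [Submodule.mem_span_pair] at hmem2
    obtain ⟨p, q, hpq⟩ := hmem2
    exact ⟨p, q, hpq.symm⟩
  -- coordinates kill (b i)² for i above the minimal support index
  have hZero : ∀ m i : Fin n, c m ≠ 0 → m < i → c i ≠ 0 → μ (b i) (b i) = 0 := by
    intro m i hcm hmi hci
    obtain ⟨p, q, hpq⟩ := hSpan i hci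
    have hrm := congrArg (fun z => b.repr z m) hpq
    simp only [map_add, map_smul, Finsupp.add_apply, Finsupp.smul_apply, Module.Basis.repr_self,
      smul_eq_mul, Finsupp.single_eq_of_ne' hmi.ne', hupper i m hmi.le, mul_zero,
      add_zero] at hrm
    have hp : p = 0 := by
      rcases mul_eq_zero.mp hrm.symm with h | h
      · exact h
      · exact absurd h hcm
    have hri := congrArg (fun z => b.repr z i) hpq
    simp only [map_add, map_smul, Finsupp.add_apply, Finsupp.smul_apply, Module.Basis.repr_self,
      smul_eq_mul, hupper i i le_rfl, hp, zero_mul, zero_add,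
      Finsupp.single_eq_same, mul_one] at hri
    rw [hpq, hp, ← hri]
    simp
  -- every term c j • (b j)² vanishes
  have key : ∀ j : Fin n, c j • μ (b j) (b j) = 0 := by
    intro j
    by_cases hcj : c j = 0
    · rw [hcj, zero_smul]
    · set S : Finset (Fin n) := Finset.univ.filter (fun i => c i ≠ 0) with hS
      have hjS : j ∈ S := by simp [hS, hcj]
      have hSne : S.Nonempty := ⟨j, hjS⟩
      set m : Fin n := S.min' hSne with hm
      have hmS : m ∈ S := S.min'_mem hSne
      have hcm : c m ≠ 0 := by simpa [hS] using hmS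
      have hsqm : μ (b m) (b m) = 0 := by
        have h0 : μ u u = ∑ i, b.repr u i • (c i • μ (b i) (b i)) := hmulz u
        rw [hu] at h0
        have h1 : ∑ i, b.repr u i • (c i • μ (b i) (b i)) =
            c m • (c m • μ (b m) (b m)) := by
          rw [Finset.sum_eq_single m]
          · intro i _ him
            by_cases hci : c i = 0
            · rw [show b.repr u i = c i from rfl, hci, zero_smul]
            · have hiS : i ∈ S := by simp [hS, hci]
              have : m < i := lt_of_le_of_ne (S.min'_le i hiS) (Ne.symm him)
              rw [hZero m i hcm this hci, smul_zero, smul_zero]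
          · intro h; exact absurd (Finset.mem_univ m) h
        rw [h1] at h0
        have h2' := h0.symm
        rw [smul_smul] at h2'
        rcases smul_eq_zero.mp h2' with h | h
        · exact absurd h (mul_ne_zero hcm hcm)
        · exact h
      by_cases hjm : j = m
      · rw [hjm, hsqm, smul_zero]
      · have : m < j := lt_of_le_of_ne (S.min'_le j hjS) (Ne.symm hjm)
        rw [hZero m j hcm this hcj, smul_zero]
  rw [hmulz y]
  simp only [key, smul_zero, Finset.sum_const_zero]
end
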